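/- Consider the ODE system with dz_i/dt = −E_o z_i/(Lμ), dz_o/dt = −E_i z_o/(Lμ), and dv/dt = −(E_o k_1 P(Z_i=k_1) v)/(Lμ) − (E_i k_2 P(Z_o=k_2) v)/(Lμ), where P(Z_i=k_1) = z_i^{k_1}/(k_1! f_{k_1}(z_i)) and P(Z_o=k_2) = z_o^{k_2}/(k_2! f_{k_2}(z_o)). Then the quantity p_{k_1}(z_i)·p_{k_2}(z_o)/v is constant in t along any solution with L, μ, v, z_i, z_o > 0. -/

import Mathlib

open Real Filter Set

/-- `truncExpSum k z = Σ_{j≥k} z^j/j!`. -/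
noncomputable def truncExpSum (k : ℕ) (z : ℝ) : ℝ :=
  ∑' j : ℕ, if k ≤ j then z ^ j / (Nat.factorial j : ℝ) else 0

/-- `poisTail k z = P(Poi(z) ≥ k) = e^{-z} Σ_{j≥k} z^j/j!`. -/
noncomputable def poisTail (k : ℕ) (z : ℝ) : ℝ := Real.exp (-z) * truncExpSum k z

/-- Mean of Poisson(z) conditioned on being ≥ k: `ψ_k(z) = z f_{k-1}(z)/f_k(z)`. -/
noncomputable def truncMean (k : ℕ) (z : ℝ) : ℝ :=
  z * truncExpSum (k - 1) z / truncExpSum k z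

/-- Second moment of the truncated Poisson. -/
noncomputable def truncSecondMoment (k : ℕ) (z : ℝ) : ℝ :=
  (∑' j : ℕ, if k ≤ j then (j : ℝ) ^ 2 * z ^ j / (Nat.factorial j : ℝ) else 0)
    / truncExpSum k z

/-- Variance of the truncated Poisson. -/
noncomputable def truncVar (k : ℕ) (z : ℝ) : ℝ :=
  truncSecondMoment k z - (truncMean k z) ^ 2

/-- `φ_r(z) = z·P(Poi(z)=r−1)/P(Poi(z)≥r)` for `r ≥ 1`, with `φ_0 := 0`. -/
noncomputable def phiP (r : ℕ) (z : ℝ) : ℝ :=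
  if r = 0 then 0
  else z * (Real.exp (-z) * z ^ (r - 1) / (Nat.factorial (r - 1) : ℝ)) / poisTail r z

/-- `H(z_i,z_o) = (1 − φ_{k_1}(z_i))(1 − φ_{k_2}(z_o)) − φ_{k_1−1}(z_i)φ_{k_2−1}(z_o)`. -/
noncomputable def Hfun (k1 k2 : ℕ) (zi zo : ℝ) : ℝ :=
  (1 - phiP k1 zi) * (1 - phiP k2 zo) - phiP (k1 - 1) zi * phiP (k2 - 1) zo

/-- `Ψ(z_i,z_o) = max{ z_i/(p_{k_1}(z_i)p_{k_2−1}(z_o)), z_o/(p_{k_2}(z_o)p_{k_1−1}(z_i)) }`. -/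
noncomputable def Psi (k1 k2 : ℕ) (zi zo : ℝ) : ℝ :=
  max (zi / (poisTail k1 zi * poisTail (k2 - 1) zo))
      (zo / (poisTail k2 zo * poisTail (k1 - 1) zi))



lemma truncExpSum_summable (k : ℕ) (z : ℝ) :
    Summable (fun j : ℕ => if k ≤ j then z ^ j / (Nat.factorial j : ℝ) else 0) := by
  have h : (fun j : ℕ => if k ≤ j then z ^ j / (Nat.factorial j : ℝ) else 0)
      = Set.indicator {j : ℕ | k ≤ j} (fun j => z ^ j / (Nat.factorial j : ℝ)) := by
    funext j
    simp [Set.indicator_apply]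
  rw [h]
  exact (Real.summable_pow_div_factorial z).indicator _

lemma truncExpSum_pos (k : ℕ) {z : ℝ} (hz : 0 < z) : 0 < truncExpSum k z := by
  refine Summable.tsum_pos (truncExpSum_summable k z) (fun j => ?_) k ?_
  · positivity
  · simp only [le_refl, if_true]
    positivity

lemma truncExpSum_eq (k : ℕ) (z : ℝ) :
    truncExpSum k z = Real.exp z - ∑ j ∈ Finset.range k, z ^ j / (Nat.factorial j : ℝ) := by
  have hs := Real.summable_pow_div_factorial z
  have hexp : Real.exp z = ∑' n : ℕ, z ^ n / (Nat.factorial n : ℝ) := by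
    rw [Real.exp_eq_exp_ℝ, NormedSpace.exp_eq_tsum_div]
  have h1 := Summable.sum_add_tsum_nat_add (f := fun n : ℕ => z ^ n / (Nat.factorial n : ℝ)) k hs
  have h2 := Summable.sum_add_tsum_nat_add
    (f := fun j : ℕ => if k ≤ j then z ^ j / (Nat.factorial j : ℝ) else 0) k
    (truncExpSum_summable k z)
  have h3 : ∑ j ∈ Finset.range k,
      (if k ≤ j then z ^ j / (Nat.factorial j : ℝ) else 0) = 0 := by
    apply Finset.sum_eq_zero
    intro j hj
    rw [Finset.mem_range] at hj
    simp [Nat.not_le.mpr hj]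
  have h4 : (fun i : ℕ => if k ≤ i + k then z ^ (i + k) / (Nat.factorial (i + k) : ℝ) else 0)
      = fun i : ℕ => z ^ (i + k) / (Nat.factorial (i + k) : ℝ) := by
    funext i; simp [Nat.le_add_left]
  rw [h3, zero_add, h4] at h2
  unfold truncExpSum
  rw [← h2, hexp, ← h1]
  ring

lemma sum_diff (k : ℕ) (z : ℝ) :
    (∑ j ∈ Finset.range k, z ^ j / (Nat.factorial j : ℝ))
      - (∑ j ∈ Finset.range k, (j : ℝ) * z ^ (j - 1) / (Nat.factorial j : ℝ))
    = (k : ℝ) * z ^ (k - 1) / (Nat.factorial k : ℝ) := by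
  induction k with
  | zero => simp
  | succ n ih =>
    rw [Finset.sum_range_succ, Finset.sum_range_succ]
    have : (∑ j ∈ Finset.range n, z ^ j / (Nat.factorial j : ℝ))
        + z ^ n / (Nat.factorial n : ℝ)
        - ((∑ j ∈ Finset.range n, (j : ℝ) * z ^ (j - 1) / (Nat.factorial j : ℝ))
          + (n : ℝ) * z ^ (n - 1) / (Nat.factorial n : ℝ))
        = ((∑ j ∈ Finset.range n, z ^ j / (Nat.factorial j : ℝ))
          - (∑ j ∈ Finset.range n, (j : ℝ) * z ^ (j - 1) / (Nat.factorial j : ℝ)))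
          + (z ^ n / (Nat.factorial n : ℝ) - (n : ℝ) * z ^ (n - 1) / (Nat.factorial n : ℝ)) := by
      ring
    rw [this, ih]
    have hfac : (Nat.factorial (n + 1) : ℝ) = (n + 1 : ℝ) * (Nat.factorial n : ℝ) := by
      rw [Nat.factorial_succ]; push_cast; ring
    have hfn : (Nat.factorial n : ℝ) ≠ 0 := Nat.cast_ne_zero.mpr (Nat.factorial_ne_zero n)
    have hn1 : ((n : ℝ) + 1) ≠ 0 := by positivity
    simp only [Nat.add_sub_cancel, hfac]
    push_cast
    field_simp
    ring

lemma pow_pred_mul (k : ℕ) (z : ℝ) : (k : ℝ) * z ^ (k - 1) * z = (k : ℝ) * z ^ k := by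
  cases k with
  | zero => simp
  | succ n => simp [pow_succ]; ring

lemma hasDerivAt_poisTail (k : ℕ) (z : ℝ) :
    HasDerivAt (fun z => poisTail k z)
      (Real.exp (-z) * ((k : ℝ) * z ^ (k - 1) / (Nat.factorial k : ℝ))) z := by
  have heq : (fun z => poisTail k z)
      = fun z => Real.exp (-z) * (Real.exp z - ∑ j ∈ Finset.range k, z ^ j / (Nat.factorial j : ℝ)) := by
    funext w; rw [poisTail, truncExpSum_eq]
  rw [heq]
  have he : HasDerivAt (fun z : ℝ => Real.exp (-z)) (-Real.exp (-z)) z := by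
    have := (Real.hasDerivAt_exp (-z)).comp z (hasDerivAt_neg z)
    exact this.congr_deriv (by simp)
  have hS : HasDerivAt (fun z : ℝ => ∑ j ∈ Finset.range k, z ^ j / (Nat.factorial j : ℝ))
      (∑ j ∈ Finset.range k, (j : ℝ) * z ^ (j - 1) / (Nat.factorial j : ℝ)) z := by
    apply HasDerivAt.fun_sum
    intro j _
    exact (hasDerivAt_pow j z).div_const _
  have h := he.mul ((Real.hasDerivAt_exp z).sub hS)
  refine h.congr_deriv (Eq.symm ?_)
  simp only [Pi.sub_apply]
  linear_combination (-Real.exp (-z)) * (sum_diff k z)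

lemma deriv_form (k : ℕ) (a E lm f : ℝ) (hf : f ≠ 0) (hl : lm ≠ 0) :
    Real.exp (-a) * ((k : ℝ) * a ^ (k - 1) / (Nat.factorial k : ℝ)) * (-(E * a) / lm)
    = -(E * (k : ℝ) * (a ^ k / ((Nat.factorial k : ℝ) * f)) / lm * (Real.exp (-a) * f)) := by
  have hk : (Nat.factorial k : ℝ) ≠ 0 := Nat.cast_ne_zero.mpr (Nat.factorial_ne_zero k)
  calc Real.exp (-a) * ((k : ℝ) * a ^ (k - 1) / (Nat.factorial k : ℝ)) * (-(E * a) / lm)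
      = -(((k : ℝ) * a ^ (k - 1) * a) * (E * Real.exp (-a)) / ((Nat.factorial k : ℝ) * lm)) := by
        ring
    _ = -(((k : ℝ) * a ^ k) * (E * Real.exp (-a)) / ((Nat.factorial k : ℝ) * lm)) := by
        rw [pow_pred_mul]
    _ = -(E * (k : ℝ) * (a ^ k / ((Nat.factorial k : ℝ) * f)) / lm * (Real.exp (-a) * f)) := by
        field_simp

/-- along the ODE system, `p_{k_1}(z_i) p_{k_2}(z_o)/v` is conserved. -/
theorem stmt19 (k1 k2 : ℕ) (zi zo v μ L Ei Eo : ℝ → ℝ)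
    (hL : ∀ t : ℝ, 0 < L t) (hμ : ∀ t : ℝ, 0 < μ t) (hv : ∀ t : ℝ, 0 < v t)
    (hzip : ∀ t : ℝ, 0 < zi t) (hzop : ∀ t : ℝ, 0 < zo t)
    (hzi : ∀ t : ℝ, HasDerivAt zi (-(Eo t * zi t) / (L t * μ t)) t)
    (hzo : ∀ t : ℝ, HasDerivAt zo (-(Ei t * zo t) / (L t * μ t)) t)
    (hv' : ∀ t : ℝ, HasDerivAt v
      (-(Eo t * k1 * (zi t ^ k1 / ((Nat.factorial k1 : ℝ) * truncExpSum k1 (zi t))) * v t)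
          / (L t * μ t)
        - (Ei t * k2 * (zo t ^ k2 / ((Nat.factorial k2 : ℝ) * truncExpSum k2 (zo t))) * v t)
          / (L t * μ t)) t) :
    ∀ s t : ℝ, poisTail k1 (zi s) * poisTail k2 (zo s) / v s
      = poisTail k1 (zi t) * poisTail k2 (zo t) / v t := by
  set g : ℝ → ℝ := fun t => poisTail k1 (zi t) * poisTail k2 (zo t) / v t with hg
  have key : ∀ u : ℝ, HasDerivAt g 0 u := by
    intro u
    have hf1 : truncExpSum k1 (zi u) ≠ 0 := (truncExpSum_pos k1 (hzip u)).ne'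
    have hf2 : truncExpSum k2 (zo u) ≠ 0 := (truncExpSum_pos k2 (hzop u)).ne'
    have hlμ : L u * μ u ≠ 0 := (mul_pos (hL u) (hμ u)).ne'
    set c1 : ℝ := Eo u * (k1 : ℝ) * (zi u ^ k1 / ((Nat.factorial k1 : ℝ) * truncExpSum k1 (zi u)))
      / (L u * μ u) with hc1
    set c2 : ℝ := Ei u * (k2 : ℝ) * (zo u ^ k2 / ((Nat.factorial k2 : ℝ) * truncExpSum k2 (zo u)))
      / (L u * μ u) with hc2
    have h1 : HasDerivAt (fun t => poisTail k1 (zi t)) (-(c1 * poisTail k1 (zi u))) u := by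
      have h := (hasDerivAt_poisTail k1 (zi u)).comp u (hzi u)
      refine h.congr_deriv (Eq.symm ?_)
      rw [hc1, poisTail]
      exact (deriv_form k1 (zi u) (Eo u) (L u * μ u) (truncExpSum k1 (zi u)) hf1 hlμ).symm
    have h2 : HasDerivAt (fun t => poisTail k2 (zo t)) (-(c2 * poisTail k2 (zo u))) u := by
      have h := (hasDerivAt_poisTail k2 (zo u)).comp u (hzo u)
      refine h.congr_deriv (Eq.symm ?_)
      rw [hc2, poisTail]
      exact (deriv_form k2 (zo u) (Ei u) (L u * μ u) (truncExpSum k2 (zo u)) hf2 hlμ).symm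
    have h3 : HasDerivAt v (-((c1 + c2) * v u)) u := by
      have h := hv' u
      convert h using 1
      rw [hc1, hc2]
      ring
    have h4 := ((h1.mul h2).div h3 (hv u).ne')
    refine h4.congr_deriv (Eq.symm ?_)
    simp only [Pi.mul_apply]
    field_simp
    ring
  intro s t
  exact is_const_of_deriv_eq_zero (fun u => (key u).differentiableAt)
    (fun u => (key u).deriv) s t
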